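/- Let R be a finite commutative ring that is weakly nil clean (every element is n + e or n − e with n nilpotent, e idempotent) and |R| even. Then the number of nil clean elements of R is at least |R|/2. -/
import Mathlib


def IsNilCleanElem {R : Type*} [CommRing R] (x : R) : Prop :=
  ∃ e n : R, IsIdempotentElem e ∧ IsNilpotent n ∧ x = e + n

def NCVertex {R : Type*} [CommRing R] (x : R) : Prop :=
  x ≠ 0 ∧ ∃ y : R, y ≠ 0 ∧ y ≠ x ∧ IsNilCleanElem (x * y)

def NCAdj {R : Type*} [CommRing R] (x y : R) : Prop :=
  x ≠ y ∧ NCVertex x ∧ NCVertex y ∧ IsNilCleanElem (x * y)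

theorem stmt10 {R : Type*} [CommRing R] [Fintype R]
    (hwnc : ∀ x : R, ∃ n e : R, IsNilpotent n ∧ IsIdempotentElem e ∧
      (x = n + e ∨ x = n - e))
    (heven : Even (Fintype.card R)) :
    Fintype.card R / 2 ≤ Set.ncard {x : R | IsNilCleanElem x} := by
  set S : Set R := {x : R | IsNilCleanElem x} with hS
  have key : ∀ x : R, x ∈ S ∨ -x ∈ S := by
    intro x
    obtain ⟨n, e, hn, he, hx | hx⟩ := hwnc x
    · exact Or.inl ⟨e, n, he, hn, by rw [hx]; ring⟩
    · exact Or.inr ⟨e, -n, he, hn.neg, by rw [hx]; ring⟩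
  have hsub : (Set.univ : Set R) ⊆ S ∪ (Neg.neg '' S) := by
    intro x _
    rcases key x with h | h
    · exact Or.inl h
    · exact Or.inr ⟨-x, h, neg_neg x⟩
  have h1 : (Set.univ : Set R).ncard ≤ (S ∪ (Neg.neg '' S)).ncard :=
    Set.ncard_le_ncard hsub (Set.toFinite _)
  have h2 : (S ∪ (Neg.neg '' S)).ncard ≤ S.ncard + (Neg.neg '' S).ncard :=
    Set.ncard_union_le _ _
  have h3 : (Neg.neg '' S).ncard = S.ncard :=
    Set.ncard_image_of_injective _ neg_injective
  have h4 : (Set.univ : Set R).ncard = Fintype.card R := by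
    simp [Set.ncard_univ, Nat.card_eq_fintype_card]
  omega
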